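/- Bound on the interior-point boundary terms in the proof of Theorem 2: With the notation of the context, define Θ_{u,2} = c Σ_{j ∈ ZMod N} ( |c·φ_j(h/4)·v_j(3h/4)| + |c·φ_j(3h/4)·v_{j+1}(h/4)| ) and Θ_{v,2} = c Σ_{j ∈ ZMod N} ( |ψ_{j+1}(h/4)·c·w_j(3h/4)| + |ψ_{j+1}(3h/4)·c·w_{j+1}(h/4)| ). Then Θ_{u,2} + Θ_{v,2} ≤ (c/h) · (128/(√3·π)) · √(q_u·(q_v+1)) · (c²‖w‖² + ‖v‖²)^{1/2} · (c²‖φ‖² + ‖ψ‖²)^{1/2}. -/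

import Mathlib

open Polynomial

/-- Squared L² norm of a broken (piecewise polynomial) function on a periodic grid
of `N` elements each of width `h`, in local coordinates `s ∈ [0,h]`. -/
noncomputable def brokenNormSq (N : ℕ) [NeZero N] (h : ℝ)
    (p : ZMod N → Polynomial ℝ) : ℝ :=
  ∑ j : ZMod N, ∫ s in (0:ℝ)..h, (p j).eval s ^ 2

section Aux

open Real Finset intervalIntegral

lemma cos_mul_sin_eq (x θ : ℝ) :
    Real.cos θ * Real.sin (x*θ) = (Real.sin ((x+1)*θ) + Real.sin ((x-1)*θ))/2 := by
  have h1 := Real.sin_add (x*θ) θ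
  have h2 := Real.sin_sub (x*θ) θ
  have e1 : (x+1)*θ = x*θ + θ := by ring
  have e2 : (x-1)*θ = x*θ - θ := by ring
  rw [e1, e2, h1, h2]; ring

lemma sine_expansion (q : ℕ) (p : Polynomial ℝ) (hp : p.natDegree ≤ q) :
    ∃ a : ℕ → ℝ, (∀ n, q + 1 ≤ n → a n = 0) ∧
      ∀ θ : ℝ, p.eval (Real.cos θ) * Real.sin θ
        = ∑ n ∈ Finset.range (q+1), a n * Real.sin (((n:ℝ)+1) * θ) := by
  induction q generalizing p with
  | zero =>
      refine ⟨fun n => if n = 0 then p.coeff 0 else 0, fun n hn => by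
        show (if n = 0 then p.coeff 0 else 0) = 0
        have h : n ≠ 0 := by omega
        simp [h], ?_⟩
      intro θ
      rw [Polynomial.eq_C_of_natDegree_le_zero hp]
      simp
  | succ q ih =>
      have hd : p.divX.natDegree ≤ q := by
        rw [Polynomial.natDegree_divX_eq_natDegree_tsub_one]
        omega
      obtain ⟨a, ha0, ha⟩ := ih p.divX hd
      set c0 := p.coeff 0 with hc0
      refine ⟨fun n => (if n = 0 then c0 + a 1 / 2 else a (n-1)/2 + a (n+1)/2), ?_, ?_⟩
      · intro n hn
        have h1 : n ≠ 0 := by omega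
        have h2 : a (n-1) = 0 := ha0 _ (by omega)
        have h3 : a (n+1) = 0 := ha0 _ (by omega)
        simp [h1, h2, h3]
      · intro θ
        set s : ℕ → ℝ := fun n => Real.sin ((n:ℝ) * θ) with hs
        have hsn : ∀ n : ℕ, Real.sin (((n:ℝ)+1) * θ) = s (n+1) := by
          intro n; simp [hs]
        have hp' : p.eval (Real.cos θ) = p.divX.eval (Real.cos θ) * Real.cos θ + c0 := by
          conv_lhs => rw [← p.divX_mul_X_add]
          simp
          exact hc0.symm
        have step1 : p.eval (Real.cos θ) * Real.sin θ
            = ∑ n ∈ Finset.range (q+1), a n * ((s (n+2) + s n)/2) + c0 * s 1 := by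
          rw [hp']
          have : (p.divX.eval (Real.cos θ) * Real.cos θ + c0) * Real.sin θ
              = Real.cos θ * (p.divX.eval (Real.cos θ) * Real.sin θ) + c0 * Real.sin θ := by ring
          rw [this, ha θ, Finset.mul_sum]
          have hterm : ∀ n ∈ Finset.range (q+1),
              Real.cos θ * (a n * Real.sin (((n:ℝ)+1) * θ)) = a n * ((s (n+2) + s n)/2) := by
            intro n _
            have := cos_mul_sin_eq ((n:ℝ)+1) θ
            have e1 : ((n:ℝ)+1+1) = ((n+2 : ℕ) : ℝ) := by push_cast; ring
            have e2 : ((n:ℝ)+1-1) = (n:ℝ) := by ring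
            rw [e1, e2] at this
            simp only [hs]
            rw [mul_comm (Real.cos θ) _, mul_assoc, mul_comm (Real.sin _) (Real.cos θ), this]
          rw [Finset.sum_congr rfl hterm]
          congr 1
          simp [hs]
        rw [step1]
        have hs0 : s 0 = 0 := by simp [hs]
        simp only [hsn]
        have key : ∑ i ∈ Finset.range (q+1), (a (i+2)/2) * s (i+2) + (a 1/2) * s 1
            = ∑ i ∈ Finset.range (q+1), (a i/2) * s i := by
          have lhs_eq : ∑ i ∈ Finset.range (q+1), (a (i+2)/2) * s (i+2)
              = ∑ k ∈ Finset.range (q+2), (a (k+1)/2) * s (k+1) - (a 1/2) * s 1 := by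
            rw [Finset.sum_range_succ' (fun k => (a (k+1)/2) * s (k+1)) (q+1)]
            simp
          have rhs_eq : ∑ i ∈ Finset.range (q+1), (a i/2) * s i
              = ∑ k ∈ Finset.range q, (a (k+1)/2) * s (k+1) := by
            rw [Finset.sum_range_succ' (fun i => (a i/2) * s i) q]
            simp [hs0]
          rw [lhs_eq, rhs_eq, Finset.sum_range_succ, Finset.sum_range_succ,
            ha0 (q+1) le_rfl, ha0 (q+2) (by omega)]
          ring
        rw [Finset.sum_range_succ' (fun n => (if n = 0 then c0 + a 1 / 2 else a (n-1)/2 + a (n+1)/2) * s (n+1)) (q+1)]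
        have e1 : ∀ i ∈ Finset.range (q+1),
            ((if i+1 = 0 then c0 + a 1 / 2 else a (i+1-1)/2 + a (i+1+1)/2) * s (i+1+1))
            = (a i/2) * s (i+2) + (a (i+2)/2) * s (i+2) := by
          intro i _
          have h1 : i + 1 ≠ 0 := by omega
          have h2 : i + 1 - 1 = i := by omega
          simp only [h1, if_false, h2]
          ring_nf
        rw [Finset.sum_congr rfl e1, Finset.sum_add_distrib]
        have e2 : ((if (0:ℕ) = 0 then c0 + a 1 / 2 else a (0-1)/2 + a (0+1)/2) * s (0+1))
            = c0 * s 1 + (a 1/2) * s 1 := by norm_num; ring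
        rw [e2]
        have goal_eq : ∀ n ∈ Finset.range (q+1), a n * ((s (n+2) + s n)/2)
            = (a n/2) * s (n+2) + (a n/2) * s n := by intro n _; ring
        rw [Finset.sum_congr rfl goal_eq, Finset.sum_add_distrib]
        linarith [key]

lemma integral_cos_mul (k : ℝ) (hk : k ≠ 0) (a b : ℝ) :
    ∫ θ in a..b, Real.cos (k*θ) = Real.sin (k*b)/k - Real.sin (k*a)/k := by
  have hd : ∀ θ ∈ Set.uIcc a b, HasDerivAt (fun t => Real.sin (k*t)/k) (Real.cos (k*θ)) θ := by
    intro θ _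
    have h := ((Real.hasDerivAt_sin (k*θ)).comp θ ((hasDerivAt_id θ).const_mul k))
    have h2 := h.div_const k
    have : Real.cos (k*θ) * (k * 1) / k = Real.cos (k*θ) := by field_simp
    rw [← this]
    exact h2
  exact integral_eq_sub_of_hasDerivAt hd ((Real.continuous_cos.comp (continuous_const.mul continuous_id)).intervalIntegrable a b)

lemma sin_orth (m n : ℕ) :
    ∫ θ in (0:ℝ)..π, Real.sin ((m+1)*θ) * Real.sin ((n+1)*θ)
      = if m = n then π/2 else 0 := by
  have key : ∀ θ : ℝ, Real.sin ((m+1)*θ) * Real.sin ((n+1)*θ)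
      = (Real.cos (((m:ℝ)-n)*θ) - Real.cos (((m:ℝ)+n+2)*θ))/2 := by
    intro θ
    have e1 : ((m:ℝ)-n)*θ = ((m:ℝ)+1)*θ - ((n:ℝ)+1)*θ := by ring
    have e2 : ((m:ℝ)+n+2)*θ = ((m:ℝ)+1)*θ + ((n:ℝ)+1)*θ := by ring
    rw [e1, e2, Real.cos_sub, Real.cos_add]; ring
  simp only [key]
  have h2 : ((m:ℝ)+n+2) ≠ 0 := by positivity
  have i2 : ∫ θ in (0:ℝ)..π, Real.cos (((m:ℝ)+n+2)*θ) = 0 := by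
    rw [integral_cos_mul _ h2]
    have : ((m:ℝ)+n+2) * π = ((m+n+2 : ℕ) : ℝ) * π := by push_cast; ring
    rw [this, Real.sin_nat_mul_pi]
    simp
  have ic : ∀ c : ℝ, IntervalIntegrable (fun θ => Real.cos (c*θ)) MeasureTheory.volume 0 π :=
    fun c => (Real.continuous_cos.comp (continuous_const.mul continuous_id)).intervalIntegrable 0 π
  rw [intervalIntegral.integral_div, intervalIntegral.integral_sub (ic _) (ic _), i2]
  by_cases hmn : m = n
  · subst hmn
    simp only [sub_self, zero_mul, Real.cos_zero]
    simp [integral_const]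
  · have h1 : ((m:ℝ)-n) ≠ 0 := by
      intro h; apply hmn
      exact_mod_cast sub_eq_zero.mp h
    rw [integral_cos_mul _ h1]
    rcases le_or_gt n m with hle | hlt
    · have : ((m:ℝ)-n) * π = ((m-n : ℕ) : ℝ) * π := by
        push_cast [Nat.cast_sub hle]; ring
      rw [this, Real.sin_nat_mul_pi]; simp [hmn]
    · have : ((m:ℝ)-n) * π = -(((n-m : ℕ) : ℝ) * π) := by
        push_cast [Nat.cast_sub hlt.le]; ring
      rw [this, Real.sin_neg, Real.sin_nat_mul_pi]; simp [hmn]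

set_option maxHeartbeats 1000000 in
lemma parseval (K : ℕ) (a : ℕ → ℝ) :
    ∫ θ in (0:ℝ)..π, (∑ n ∈ Finset.range K, a n * Real.sin (((n:ℝ)+1) * θ))^2
      = (π/2) * ∑ n ∈ Finset.range K, (a n)^2 := by
  have hpt : ∀ θ : ℝ, (∑ n ∈ Finset.range K, a n * Real.sin (((n:ℝ)+1) * θ))^2
      = ∑ m ∈ Finset.range K, ∑ n ∈ Finset.range K,
          (a m * a n) * (Real.sin (((m:ℝ)+1)*θ) * Real.sin (((n:ℝ)+1)*θ)) := by
    intro θ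
    rw [sq, Finset.sum_mul_sum]
    exact Finset.sum_congr rfl fun m _ => Finset.sum_congr rfl fun n _ => by ring
  simp only [hpt]
  have hint : ∀ m n : ℕ, IntervalIntegrable
      (fun θ => (a m * a n) * (Real.sin (((m:ℝ)+1)*θ) * Real.sin (((n:ℝ)+1)*θ)))
      MeasureTheory.volume 0 π := by
    intro m n
    exact (continuous_const.mul ((Real.continuous_sin.comp (continuous_const.mul continuous_id)).mul
      (Real.continuous_sin.comp (continuous_const.mul continuous_id)))).intervalIntegrable 0 π
  have swap1 : (∫ θ in (0:ℝ)..π, ∑ m ∈ Finset.range K, ∑ n ∈ Finset.range K,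
        (a m * a n) * (Real.sin (((m:ℝ)+1)*θ) * Real.sin (((n:ℝ)+1)*θ)))
      = ∑ m ∈ Finset.range K, ∫ θ in (0:ℝ)..π, ∑ n ∈ Finset.range K,
        (a m * a n) * (Real.sin (((m:ℝ)+1)*θ) * Real.sin (((n:ℝ)+1)*θ)) :=
    intervalIntegral.integral_finset_sum
      (fun m _ => ((continuous_finset_sum _ (fun n _ => continuous_const.mul
        ((Real.continuous_sin.comp (continuous_const.mul continuous_id)).mul
        (Real.continuous_sin.comp (continuous_const.mul continuous_id))))).intervalIntegrable 0 π))
  rw [swap1]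
  have : ∀ m ∈ Finset.range K,
      (∫ θ in (0:ℝ)..π, ∑ n ∈ Finset.range K,
        (a m * a n) * (Real.sin (((m:ℝ)+1)*θ) * Real.sin (((n:ℝ)+1)*θ)))
      = (a m)^2 * (π/2) := by
    intro m hm
    have swap2 : (∫ θ in (0:ℝ)..π, ∑ n ∈ Finset.range K,
          (a m * a n) * (Real.sin (((m:ℝ)+1)*θ) * Real.sin (((n:ℝ)+1)*θ)))
        = ∑ n ∈ Finset.range K, ∫ θ in (0:ℝ)..π,
          (a m * a n) * (Real.sin (((m:ℝ)+1)*θ) * Real.sin (((n:ℝ)+1)*θ)) :=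
      intervalIntegral.integral_finset_sum (fun n _ => hint m n)
    rw [swap2]
    have : ∀ n ∈ Finset.range K,
        (∫ θ in (0:ℝ)..π, (a m * a n) * (Real.sin (((m:ℝ)+1)*θ) * Real.sin (((n:ℝ)+1)*θ)))
        = if m = n then a m * a n * (π/2) else 0 := by
      intro n _
      rw [intervalIntegral.integral_const_mul, sin_orth]
      by_cases hmn : m = n <;> simp [hmn]
    rw [Finset.sum_congr rfl this, Finset.sum_ite_eq (Finset.range K) m (fun n => a m * a n * (π/2))]
    simp [hm, sq]
  rw [Finset.sum_congr rfl this, ← Finset.sum_mul]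
  ring

lemma sample_bound_unit (q : ℕ) (p : Polynomial ℝ) (hp : p.natDegree ≤ q)
    (x₀ : ℝ) (hx : x₀ = 1/2 ∨ x₀ = -(1/2)) :
    (p.eval x₀)^2 ≤ 8/(3*π) * ((q:ℝ)+1) * ∫ x in (-1:ℝ)..1, (p.eval x)^2 := by
  obtain ⟨a, ha0, ha⟩ := sine_expansion q p hp
  -- choose θ₀
  obtain ⟨θ₀, hθc, hθs, hθmem⟩ :
      ∃ θ₀ : ℝ, Real.cos θ₀ = x₀ ∧ Real.sin θ₀ = Real.sqrt 3 / 2 ∧ θ₀ ∈ Set.Icc (0:ℝ) π := by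
    rcases hx with h | h
    · exact ⟨π/3, by rw [Real.cos_pi_div_three, h], Real.sin_pi_div_three,
        ⟨by positivity, by linarith [Real.pi_pos]⟩⟩
    · refine ⟨π - π/3, ?_, ?_, ⟨by linarith [Real.pi_pos], by linarith [Real.pi_pos]⟩⟩
      · rw [Real.cos_pi_sub, Real.cos_pi_div_three, h]
      · rw [Real.sin_pi_sub, Real.sin_pi_div_three]
  have h3 : Real.sqrt 3 > 0 := by positivity
  have hS := ha θ₀
  rw [hθc, hθs] at hS
  set S := ∑ n ∈ Finset.range (q+1), a n * Real.sin (((n:ℝ)+1) * θ₀) with hSdef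
  -- Cauchy-Schwarz : S^2 ≤ (q+1) * Σ a²
  have hCS : S^2 ≤ ((q:ℝ)+1) * ∑ n ∈ Finset.range (q+1), (a n)^2 := by
    have := Finset.sum_mul_sq_le_sq_mul_sq (Finset.range (q+1)) a
      (fun n => Real.sin (((n:ℝ)+1) * θ₀))
    have hsin : ∑ n ∈ Finset.range (q+1), Real.sin (((n:ℝ)+1) * θ₀)^2 ≤ ((q:ℝ)+1) := by
      calc ∑ n ∈ Finset.range (q+1), Real.sin (((n:ℝ)+1) * θ₀)^2
          ≤ ∑ n ∈ Finset.range (q+1), 1 := by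
            apply Finset.sum_le_sum; intro n _; exact Real.sin_sq_le_one _
        _ = ((q:ℝ)+1) := by simp
    have hnn : (0:ℝ) ≤ ∑ n ∈ Finset.range (q+1), (a n)^2 :=
      Finset.sum_nonneg fun n _ => sq_nonneg _
    calc S^2 ≤ (∑ n ∈ Finset.range (q+1), (a n)^2)
            * ∑ n ∈ Finset.range (q+1), Real.sin (((n:ℝ)+1) * θ₀)^2 := this
      _ ≤ (∑ n ∈ Finset.range (q+1), (a n)^2) * ((q:ℝ)+1) := by
          exact mul_le_mul_of_nonneg_left hsin hnn
      _ = ((q:ℝ)+1) * ∑ n ∈ Finset.range (q+1), (a n)^2 := by ring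
  -- Σ a² = (2/π) ∫ g²
  have hPar := parseval (q+1) a
  -- ∫ g² ≤ ∫ p(cosθ)² sinθ
  have hcont_pc : Continuous fun θ : ℝ => (p.eval (Real.cos θ))^2 * Real.sin θ :=
    (((p.continuous_aeval).comp Real.continuous_cos).pow 2).mul Real.continuous_sin
  have hcont_g : Continuous fun θ : ℝ =>
      (∑ n ∈ Finset.range (q+1), a n * Real.sin (((n:ℝ)+1) * θ))^2 := by
    apply Continuous.pow
    exact continuous_finset_sum _ (fun n _ => continuous_const.mul
      (Real.continuous_sin.comp (continuous_const.mul continuous_id)))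
  have hmono : (∫ θ in (0:ℝ)..π, (∑ n ∈ Finset.range (q+1), a n * Real.sin (((n:ℝ)+1) * θ))^2)
      ≤ ∫ θ in (0:ℝ)..π, (p.eval (Real.cos θ))^2 * Real.sin θ := by
    apply intervalIntegral.integral_mono_on Real.pi_pos.le
      (hcont_g.intervalIntegrable 0 π) (hcont_pc.intervalIntegrable 0 π)
    intro θ hθ
    rw [← ha θ]
    have hsnn : 0 ≤ Real.sin θ := Real.sin_nonneg_of_nonneg_of_le_pi hθ.1 hθ.2
    have hsle : Real.sin θ ≤ 1 := Real.sin_le_one θ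
    nlinarith [mul_nonneg (mul_nonneg (sq_nonneg (p.eval (Real.cos θ))) hsnn) (sub_nonneg.mpr hsle)]
  -- substitution
  have hsub : (∫ θ in (0:ℝ)..π, (p.eval (Real.cos θ))^2 * Real.sin θ)
      = ∫ x in (-1:ℝ)..1, (p.eval x)^2 := by
    have hderiv : ∀ θ ∈ Set.uIcc (0:ℝ) π, HasDerivAt Real.cos (-Real.sin θ) θ :=
      fun θ _ => Real.hasDerivAt_cos θ
    have := intervalIntegral.integral_comp_smul_deriv hderiv
      (Real.continuous_sin.neg.continuousOn) (g := fun x => (p.eval x)^2)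
      ((p.continuous_aeval).pow 2)
    rw [Real.cos_zero, Real.cos_pi] at this
    have lhs_eq : (∫ θ in (0:ℝ)..π, (-Real.sin θ) • ((fun x => (p.eval x)^2) ∘ Real.cos) θ)
        = -∫ θ in (0:ℝ)..π, (p.eval (Real.cos θ))^2 * Real.sin θ := by
      rw [← intervalIntegral.integral_neg]
      congr 1; funext θ; simp [Function.comp]; ring
    rw [lhs_eq] at this
    have : ∫ θ in (0:ℝ)..π, (p.eval (Real.cos θ))^2 * Real.sin θ = -∫ x in (1:ℝ)..(-1), (p.eval x)^2 := by
      linarith [this]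
    rw [this, intervalIntegral.integral_symm]
    ring
  -- combine
  have hpi := Real.pi_pos
  have hInn : (0:ℝ) ≤ ∫ x in (-1:ℝ)..1, (p.eval x)^2 := by
    apply intervalIntegral.integral_nonneg (by norm_num)
    intro x _; positivity
  have hx0 : p.eval x₀ = S * (2 / Real.sqrt 3) := by
    field_simp at hS ⊢
    nlinarith [hS]
  have hsq3 : (Real.sqrt 3)^2 = 3 := Real.sq_sqrt (by norm_num)
  have : (p.eval x₀)^2 = S^2 * (4/3) := by
    rw [hx0, mul_pow]
    congr 1
    rw [div_pow, hsq3]; norm_num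
  rw [this]
  have hgle : S^2 ≤ ((q:ℝ)+1) * ((2/π) * ∫ x in (-1:ℝ)..1, (p.eval x)^2) := by
    have h1 : ∑ n ∈ Finset.range (q+1), (a n)^2
        = (2/π) * ∫ θ in (0:ℝ)..π, (∑ n ∈ Finset.range (q+1), a n * Real.sin (((n:ℝ)+1) * θ))^2 := by
      rw [hPar]; field_simp
    calc S^2 ≤ ((q:ℝ)+1) * ∑ n ∈ Finset.range (q+1), (a n)^2 := hCS
      _ = ((q:ℝ)+1) * ((2/π) * ∫ θ in (0:ℝ)..π,
            (∑ n ∈ Finset.range (q+1), a n * Real.sin (((n:ℝ)+1) * θ))^2) := by rw [← h1]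
      _ ≤ ((q:ℝ)+1) * ((2/π) * ∫ x in (-1:ℝ)..1, (p.eval x)^2) := by
          apply mul_le_mul_of_nonneg_left _ (by positivity)
          apply mul_le_mul_of_nonneg_left _ (by positivity)
          rw [← hsub]; exact hmono
  calc S^2 * (4/3) ≤ (((q:ℝ)+1) * ((2/π) * ∫ x in (-1:ℝ)..1, (p.eval x)^2)) * (4/3) := by
        apply mul_le_mul_of_nonneg_right hgle (by norm_num)
    _ = 8/(3*π) * ((q:ℝ)+1) * ∫ x in (-1:ℝ)..1, (p.eval x)^2 := by field_simp; ring

lemma sample_bound (q : ℕ) (h : ℝ) (hh : 0 < h) (p : Polynomial ℝ) (hp : p.natDegree ≤ q)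
    (x₀ : ℝ) (hx : x₀ = h/4 ∨ x₀ = 3*h/4) :
    (p.eval x₀)^2 ≤ 16/(3*π) * ((q:ℝ)+1) / h * ∫ s in (0:ℝ)..h, (p.eval s)^2 := by
  set pc := p.comp (Polynomial.C (h/2) * (Polynomial.X + 1)) with hpc
  have hdeg : pc.natDegree ≤ q := by
    have h1 : (Polynomial.C (h/2) * (Polynomial.X + 1) : Polynomial ℝ).natDegree ≤ 1 := by
      have := Polynomial.natDegree_C_mul_le (h/2) (Polynomial.X + 1 : Polynomial ℝ)
      have h2 : ((Polynomial.X + 1 : Polynomial ℝ)).natDegree = 1 := by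
        simpa using Polynomial.natDegree_X_add_C (1:ℝ)
      omega
    calc pc.natDegree ≤ p.natDegree * (Polynomial.C (h/2) * (Polynomial.X + 1)).natDegree :=
          Polynomial.natDegree_comp_le
      _ ≤ q * 1 := Nat.mul_le_mul hp h1
      _ = q := by omega
  have heval : ∀ t : ℝ, pc.eval t = p.eval (h/2 * (t+1)) := by
    intro t; simp [hpc, Polynomial.eval_comp]
  have hIeq : (∫ t in (-1:ℝ)..1, (pc.eval t)^2) = (2/h) * ∫ s in (0:ℝ)..h, (p.eval s)^2 := by
    have e : (fun t : ℝ => (pc.eval t)^2) = fun t => (fun s => (p.eval s)^2) (h/2 * t + h/2) := by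
      funext t
      rw [heval]
      have : h/2 * (t+1) = h/2 * t + h/2 := by ring
      rw [this]
    rw [intervalIntegral.integral_congr (g := fun t => (fun s => (p.eval s)^2) (h/2 * t + h/2))
      (fun x _ => congrFun e x)]
    have := intervalIntegral.integral_comp_mul_add (a := (-1:ℝ)) (b := 1)
      (f := fun s => (p.eval s)^2) (c := h/2) (by positivity : (0:ℝ) < h/2).ne' (h/2)
    rw [this]
    have e1 : h/2 * (-1) + h/2 = 0 := by ring
    have e2 : h/2 * 1 + h/2 = h := by ring
    rw [e1, e2, smul_eq_mul]
    congr 1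
    rw [inv_div]
  have hb : (pc.eval (if x₀ = h/4 then -(1/2) else (1/2)))^2
      ≤ 8/(3*π) * ((q:ℝ)+1) * ∫ t in (-1:ℝ)..1, (pc.eval t)^2 := by
    apply sample_bound_unit q pc hdeg
    by_cases hc : x₀ = h/4 <;> simp [hc]
  have hev : pc.eval (if x₀ = h/4 then -(1/2) else (1/2)) = p.eval x₀ := by
    rcases hx with hcase | hcase
    · rw [if_pos hcase, heval, hcase]; congr 1; ring
    · have hne : ¬ (x₀ = h/4) ∨ h = 0 := by
        by_cases hz : x₀ = h/4
        · right; rw [hcase] at hz; linarith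
        · left; exact hz
      rcases hne with hne | hz
      · rw [if_neg hne, heval, hcase]; congr 1; ring
      · exact absurd hz hh.ne'
  rw [hev] at hb
  calc (p.eval x₀)^2 ≤ 8/(3*π) * ((q:ℝ)+1) * ∫ t in (-1:ℝ)..1, (pc.eval t)^2 := hb
    _ = 8/(3*π) * ((q:ℝ)+1) * ((2/h) * ∫ s in (0:ℝ)..h, (p.eval s)^2) := by rw [hIeq]
    _ = 16/(3*π) * ((q:ℝ)+1) / h * ∫ s in (0:ℝ)..h, (p.eval s)^2 := by
        field_simp; ring

lemma two_cs (a1 a2 b1 b2 : ℝ) :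
    a1*b1 + a2*b2 ≤ Real.sqrt (a1^2+a2^2) * Real.sqrt (b1^2+b2^2) := by
  have := Real.sum_mul_le_sqrt_mul_sqrt (Finset.univ : Finset (Fin 2)) ![a1,a2] ![b1,b2]
  simpa [Fin.sum_univ_two] using this

set_option maxHeartbeats 1600000 in
theorem staggered_interior_point_terms_bound
    (N : ℕ) [NeZero N] (hN : 1 ≤ N) (h c : ℝ) (hh : 0 < h) (hc : 0 < c)
    (qu qv : ℕ) (hqu : 1 ≤ qu)
    (w φ v ψ : ZMod N → Polynomial ℝ)
    (hw : ∀ j, (w j).natDegree ≤ qu - 1) (hφ : ∀ j, (φ j).natDegree ≤ qu - 1)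
    (hv : ∀ j, (v j).natDegree ≤ qv) (hψ : ∀ j, (ψ j).natDegree ≤ qv)
    (Θu2 Θv2 : ℝ)
    (hΘu2 : Θu2 = c * ∑ j : ZMod N,
        (|c * (φ j).eval (h / 4) * (v j).eval (3 * h / 4)|
          + |c * (φ j).eval (3 * h / 4) * (v (j + 1)).eval (h / 4)|))
    (hΘv2 : Θv2 = c * ∑ j : ZMod N,
        (|(ψ (j + 1)).eval (h / 4) * (c * (w j).eval (3 * h / 4))|
          + |(ψ (j + 1)).eval (3 * h / 4) * (c * (w (j + 1)).eval (h / 4))|)) :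
    Θu2 + Θv2 ≤
      c / h * (128 / (Real.sqrt 3 * Real.pi)) * Real.sqrt ((qu : ℝ) * ((qv : ℝ) + 1))
        * Real.sqrt (c ^ 2 * brokenNormSq N h w + brokenNormSq N h v)
        * Real.sqrt (c ^ 2 * brokenNormSq N h φ + brokenNormSq N h ψ) := by
  have hπ := Real.pi_pos
  set Cu : ℝ := 16/(3*π) * (qu:ℝ) / h with hCu
  set Cv : ℝ := 16/(3*π) * ((qv:ℝ)+1) / h with hCv
  have hCupos : 0 ≤ Cu := by
    have : (0:ℝ) ≤ (qu:ℝ) := Nat.cast_nonneg _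
    positivity
  have hCvpos : 0 ≤ Cv := by positivity
  -- nonnegativity of integrals and norms
  have hIntnn : ∀ (p : ZMod N → Polynomial ℝ) (j : ZMod N),
      (0:ℝ) ≤ ∫ s in (0:ℝ)..h, (p j).eval s ^ 2 := by
    intro p j
    apply intervalIntegral.integral_nonneg hh.le
    intro s _; positivity
  set Nw := brokenNormSq N h w with hNw
  set Nv := brokenNormSq N h v with hNv
  set Nφ := brokenNormSq N h φ with hNφ
  set Nψ := brokenNormSq N h ψ with hNψ
  have hNwnn : 0 ≤ Nw := Finset.sum_nonneg fun j _ => hIntnn w j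
  have hNvnn : 0 ≤ Nv := Finset.sum_nonneg fun j _ => hIntnn v j
  have hNφnn : 0 ≤ Nφ := Finset.sum_nonneg fun j _ => hIntnn φ j
  have hNψnn : 0 ≤ Nψ := Finset.sum_nonneg fun j _ => hIntnn ψ j
  -- pointwise sample bounds
  have hcast : ((qu - 1 : ℕ) : ℝ) + 1 = (qu:ℝ) := by
    rw [Nat.cast_sub hqu]; push_cast; ring
  have hφpt : ∀ (j : ZMod N) (x₀ : ℝ), (x₀ = h/4 ∨ x₀ = 3*h/4) →
      ((φ j).eval x₀)^2 ≤ Cu * ∫ s in (0:ℝ)..h, (φ j).eval s ^ 2 := by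
    intro j x₀ hx
    have := sample_bound (qu-1) h hh (φ j) (hφ j) x₀ hx
    rwa [hcast] at this
  have hwpt : ∀ (j : ZMod N) (x₀ : ℝ), (x₀ = h/4 ∨ x₀ = 3*h/4) →
      ((w j).eval x₀)^2 ≤ Cu * ∫ s in (0:ℝ)..h, (w j).eval s ^ 2 := by
    intro j x₀ hx
    have := sample_bound (qu-1) h hh (w j) (hw j) x₀ hx
    rwa [hcast] at this
  have hvpt : ∀ (j : ZMod N) (x₀ : ℝ), (x₀ = h/4 ∨ x₀ = 3*h/4) →
      ((v j).eval x₀)^2 ≤ Cv * ∫ s in (0:ℝ)..h, (v j).eval s ^ 2 := fun j x₀ hx =>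
    sample_bound qv h hh (v j) (hv j) x₀ hx
  have hψpt : ∀ (j : ZMod N) (x₀ : ℝ), (x₀ = h/4 ∨ x₀ = 3*h/4) →
      ((ψ j).eval x₀)^2 ≤ Cv * ∫ s in (0:ℝ)..h, (ψ j).eval s ^ 2 := fun j x₀ hx =>
    sample_bound qv h hh (ψ j) (hψ j) x₀ hx
  -- shift lemma
  have shift : ∀ (F : ZMod N → ℝ), ∑ j : ZMod N, F (j+1) = ∑ j : ZMod N, F j := fun F =>
    Fintype.sum_equiv (Equiv.addRight (1 : ZMod N)) _ _ (fun x => rfl)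
  -- generic Cauchy-Schwarz sum bound
  have hCS : ∀ (f g : ZMod N → ℝ) (Ma Mb : ℝ), (∑ j : ZMod N, f j ^2 ≤ Ma) →
      (∑ j : ZMod N, g j ^2 ≤ Mb) →
      ∑ j : ZMod N, |f j| * |g j| ≤ Real.sqrt Ma * Real.sqrt Mb := by
    intro f g Ma Mb hfa hgb
    have h1 := Real.sum_mul_le_sqrt_mul_sqrt (Finset.univ : Finset (ZMod N))
      (fun j => |f j|) (fun j => |g j|)
    have h2 : ∑ j : ZMod N, |f j|^2 = ∑ j : ZMod N, f j ^2 := by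
      exact Finset.sum_congr rfl fun j _ => sq_abs _
    have h3 : ∑ j : ZMod N, |g j|^2 = ∑ j : ZMod N, g j ^2 := by
      exact Finset.sum_congr rfl fun j _ => sq_abs _
    rw [h2, h3] at h1
    calc ∑ j : ZMod N, |f j| * |g j|
        ≤ Real.sqrt (∑ j : ZMod N, f j ^2) * Real.sqrt (∑ j : ZMod N, g j ^2) := h1
      _ ≤ Real.sqrt Ma * Real.sqrt Mb := by
          apply mul_le_mul (Real.sqrt_le_sqrt hfa) (Real.sqrt_le_sqrt hgb)
            (Real.sqrt_nonneg _) (Real.sqrt_nonneg _)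
  -- the four sums
  set S1 := ∑ j : ZMod N, |(φ j).eval (h/4)| * |(v j).eval (3*h/4)| with hS1
  set S2 := ∑ j : ZMod N, |(φ j).eval (3*h/4)| * |(v (j+1)).eval (h/4)| with hS2
  set S3 := ∑ j : ZMod N, |(ψ (j+1)).eval (h/4)| * |(w j).eval (3*h/4)| with hS3
  set S4 := ∑ j : ZMod N, |(ψ (j+1)).eval (3*h/4)| * |(w (j+1)).eval (h/4)| with hS4
  -- sum bounds
  have sumφ1 : ∑ j : ZMod N, ((φ j).eval (h/4))^2 ≤ Cu * Nφ := by
    rw [hNφ, brokenNormSq, Finset.mul_sum]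
    exact Finset.sum_le_sum fun j _ => hφpt j _ (Or.inl rfl)
  have sumφ2 : ∑ j : ZMod N, ((φ j).eval (3*h/4))^2 ≤ Cu * Nφ := by
    rw [hNφ, brokenNormSq, Finset.mul_sum]
    exact Finset.sum_le_sum fun j _ => hφpt j _ (Or.inr rfl)
  have sumv1 : ∑ j : ZMod N, ((v j).eval (3*h/4))^2 ≤ Cv * Nv := by
    rw [hNv, brokenNormSq, Finset.mul_sum]
    exact Finset.sum_le_sum fun j _ => hvpt j _ (Or.inr rfl)
  have sumv2 : ∑ j : ZMod N, ((v (j+1)).eval (h/4))^2 ≤ Cv * Nv := by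
    rw [shift (fun j => ((v j).eval (h/4))^2), hNv, brokenNormSq, Finset.mul_sum]
    exact Finset.sum_le_sum fun j _ => hvpt j _ (Or.inl rfl)
  have sumψ1 : ∑ j : ZMod N, ((ψ (j+1)).eval (h/4))^2 ≤ Cv * Nψ := by
    rw [shift (fun j => ((ψ j).eval (h/4))^2), hNψ, brokenNormSq, Finset.mul_sum]
    exact Finset.sum_le_sum fun j _ => hψpt j _ (Or.inl rfl)
  have sumψ2 : ∑ j : ZMod N, ((ψ (j+1)).eval (3*h/4))^2 ≤ Cv * Nψ := by
    rw [shift (fun j => ((ψ j).eval (3*h/4))^2), hNψ, brokenNormSq, Finset.mul_sum]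
    exact Finset.sum_le_sum fun j _ => hψpt j _ (Or.inr rfl)
  have sumw1 : ∑ j : ZMod N, ((w j).eval (3*h/4))^2 ≤ Cu * Nw := by
    rw [hNw, brokenNormSq, Finset.mul_sum]
    exact Finset.sum_le_sum fun j _ => hwpt j _ (Or.inr rfl)
  have sumw2 : ∑ j : ZMod N, ((w (j+1)).eval (h/4))^2 ≤ Cu * Nw := by
    rw [shift (fun j => ((w j).eval (h/4))^2), hNw, brokenNormSq, Finset.mul_sum]
    exact Finset.sum_le_sum fun j _ => hwpt j _ (Or.inl rfl)
  have bS1 : S1 ≤ Real.sqrt (Cu * Nφ) * Real.sqrt (Cv * Nv) := hCS _ _ _ _ sumφ1 sumv1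
  have bS2 : S2 ≤ Real.sqrt (Cu * Nφ) * Real.sqrt (Cv * Nv) := hCS _ _ _ _ sumφ2 sumv2
  have bS3 : S3 ≤ Real.sqrt (Cv * Nψ) * Real.sqrt (Cu * Nw) := hCS _ _ _ _ sumψ1 sumw1
  have bS4 : S4 ≤ Real.sqrt (Cv * Nψ) * Real.sqrt (Cu * Nw) := hCS _ _ _ _ sumψ2 sumw2
  -- Θ equality
  have hΘ : Θu2 + Θv2 = c^2 * (S1 + S2) + c^2 * (S3 + S4) := by
    rw [hΘu2, hΘv2]
    have e1 : ∀ j : ZMod N, |c * (φ j).eval (h / 4) * (v j).eval (3 * h / 4)|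
        + |c * (φ j).eval (3 * h / 4) * (v (j + 1)).eval (h / 4)|
        = c * (|(φ j).eval (h/4)| * |(v j).eval (3*h/4)|)
          + c * (|(φ j).eval (3*h/4)| * |(v (j+1)).eval (h/4)|) := by
      intro j
      rw [abs_mul, abs_mul, abs_mul, abs_mul, abs_of_pos hc]; ring
    have e2 : ∀ j : ZMod N, |(ψ (j + 1)).eval (h / 4) * (c * (w j).eval (3 * h / 4))|
        + |(ψ (j + 1)).eval (3 * h / 4) * (c * (w (j + 1)).eval (h / 4))|
        = c * (|(ψ (j+1)).eval (h/4)| * |(w j).eval (3*h/4)|)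
          + c * (|(ψ (j+1)).eval (3*h/4)| * |(w (j+1)).eval (h/4)|) := by
      intro j
      rw [abs_mul, abs_mul, abs_mul, abs_mul, abs_of_pos hc]; ring
    rw [Finset.sum_congr rfl (fun j _ => e1 j), Finset.sum_congr rfl (fun j _ => e2 j),
      Finset.sum_add_distrib, Finset.sum_add_distrib,
      ← Finset.mul_sum, ← Finset.mul_sum, ← Finset.mul_sum, ← Finset.mul_sum,
      ← hS1, ← hS2, ← hS3, ← hS4]
    ring
  -- split sqrt of products
  have hsplit : ∀ (A B : ℝ), 0 ≤ A → 0 ≤ B →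
      Real.sqrt (Cu * A) * Real.sqrt (Cv * B)
        = Real.sqrt (Cu * Cv) * (Real.sqrt A * Real.sqrt B) := by
    intro A B hA hB
    rw [Real.sqrt_mul hCupos, Real.sqrt_mul hCvpos, Real.sqrt_mul hCupos Cv]
    ring
  set G := Real.sqrt ((qu : ℝ) * ((qv : ℝ) + 1)) with hG
  have hCuCv : Real.sqrt (Cu * Cv) = 16/(3*π)/h * G := by
    have e : Cu * Cv = (16/(3*π)/h)^2 * ((qu:ℝ) * ((qv:ℝ)+1)) := by
      rw [hCu, hCv]; field_simp
    rw [e, Real.sqrt_mul (sq_nonneg _), Real.sqrt_sq (by positivity)]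
  -- final two-term Cauchy-Schwarz
  have final_cs : c * Real.sqrt Nφ * Real.sqrt Nv + Real.sqrt Nψ * (c * Real.sqrt Nw)
      ≤ Real.sqrt (c^2 * Nφ + Nψ) * Real.sqrt (Nv + c^2 * Nw) := by
    have := two_cs (c * Real.sqrt Nφ) (Real.sqrt Nψ) (Real.sqrt Nv) (c * Real.sqrt Nw)
    have e1 : (c * Real.sqrt Nφ)^2 = c^2 * Nφ := by
      rw [mul_pow, Real.sq_sqrt hNφnn]
    have e2 : (Real.sqrt Nψ)^2 = Nψ := Real.sq_sqrt hNψnn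
    have e3 : (Real.sqrt Nv)^2 = Nv := Real.sq_sqrt hNvnn
    have e4 : (c * Real.sqrt Nw)^2 = c^2 * Nw := by
      rw [mul_pow, Real.sq_sqrt hNwnn]
    rw [e1, e2, e3, e4] at this
    calc c * Real.sqrt Nφ * Real.sqrt Nv + Real.sqrt Nψ * (c * Real.sqrt Nw)
        = (c * Real.sqrt Nφ) * Real.sqrt Nv + Real.sqrt Nψ * (c * Real.sqrt Nw) := by ring
      _ ≤ _ := this
  -- assemble
  have hGnn : 0 ≤ G := Real.sqrt_nonneg _
  have step : Θu2 + Θv2 ≤ c * (2 * (16/(3*π)/h) * G) *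
      (Real.sqrt (c^2 * Nφ + Nψ) * Real.sqrt (Nv + c^2 * Nw)) := by
    rw [hΘ]
    have b12 : c^2 * (S1 + S2) ≤ c^2 * (2 * (Real.sqrt (Cu * Nφ) * Real.sqrt (Cv * Nv))) := by
      apply mul_le_mul_of_nonneg_left _ (sq_nonneg c)
      linarith [bS1, bS2]
    have b34 : c^2 * (S3 + S4) ≤ c^2 * (2 * (Real.sqrt (Cv * Nψ) * Real.sqrt (Cu * Nw))) := by
      apply mul_le_mul_of_nonneg_left _ (sq_nonneg c)
      linarith [bS3, bS4]
    have key : c^2 * (2 * (Real.sqrt (Cu * Nφ) * Real.sqrt (Cv * Nv)))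
        + c^2 * (2 * (Real.sqrt (Cv * Nψ) * Real.sqrt (Cu * Nw)))
        ≤ c * (2 * (16/(3*π)/h) * G) *
          (Real.sqrt (c^2 * Nφ + Nψ) * Real.sqrt (Nv + c^2 * Nw)) := by
      rw [hsplit Nφ Nv hNφnn hNvnn]
      have hswap : Real.sqrt (Cv * Nψ) * Real.sqrt (Cu * Nw)
          = Real.sqrt (Cu * Nw) * Real.sqrt (Cv * Nψ) := by ring
      rw [hswap, hsplit Nw Nψ hNwnn hNψnn, hCuCv]
      have expand : c^2 * (2 * (16/(3*π)/h * G * (Real.sqrt Nφ * Real.sqrt Nv)))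
          + c^2 * (2 * (16/(3*π)/h * G * (Real.sqrt Nw * Real.sqrt Nψ)))
          = c * (2 * (16/(3*π)/h) * G) *
            (c * Real.sqrt Nφ * Real.sqrt Nv + Real.sqrt Nψ * (c * Real.sqrt Nw)) := by
        ring
      rw [expand]
      apply mul_le_mul_of_nonneg_left final_cs
      positivity
    linarith [b12, b34, key]
  -- constant comparison
  have hsqrt3 : Real.sqrt 3 ≤ 2 := by
    nlinarith [Real.sq_sqrt (show (0:ℝ) ≤ 3 by norm_num), Real.sqrt_nonneg 3]
  have hsqrt3pos : 0 < Real.sqrt 3 := by positivity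
  have hconst : 2 * (16/(3*π)/h) ≤ 128 / (Real.sqrt 3 * π) / h := by
    have h1 : (32:ℝ)/(3*π) ≤ 128/(Real.sqrt 3 * π) := by
      rw [div_le_div_iff₀ (by positivity) (by positivity)]
      nlinarith [hsqrt3, hπ, hsqrt3pos]
    have h2 : 2 * (16/(3*π)/h) = (32/(3*π))/h := by ring
    rw [h2]
    gcongr
  have hadd : Real.sqrt (Nv + c^2 * Nw) = Real.sqrt (c^2 * Nw + Nv) := by rw [add_comm]
  calc Θu2 + Θv2
      ≤ c * (2 * (16/(3*π)/h) * G) *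
        (Real.sqrt (c^2 * Nφ + Nψ) * Real.sqrt (Nv + c^2 * Nw)) := step
    _ ≤ c * ((128 / (Real.sqrt 3 * π) / h) * G) *
        (Real.sqrt (c^2 * Nφ + Nψ) * Real.sqrt (Nv + c^2 * Nw)) := by
        apply mul_le_mul_of_nonneg_right _ (by positivity)
        apply mul_le_mul_of_nonneg_left _ hc.le
        exact mul_le_mul_of_nonneg_right hconst hGnn
    _ = c / h * (128 / (Real.sqrt 3 * π)) * G
        * Real.sqrt (c ^ 2 * Nw + Nv) * Real.sqrt (c ^ 2 * Nφ + Nψ) := by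
        rw [hadd]; ring

end Aux
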